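/- Let f be a transcendental entire function such that the Julia set J(f) is a spider's web. Then the residual Julia set J_r(f) is nonempty. -/

import Mathlib

open Filter Topology Set Bornology

noncomputable section

/-- `f : ℂ → ℂ` is a transcendental entire function: it is differentiable on all of `ℂ`
and is not a polynomial. -/
def TranscendentalEntire (f : ℂ → ℂ) : Prop :=
  Differentiable ℂ f ∧ ¬ ∃ p : Polynomial ℂ, ∀ z, f z = p.eval z

/-- The spherical (chordal) metric on the Riemann sphere `ℂ ∪ {∞}`, realised as `OnePoint ℂ`. -/
noncomputable def sphericalDist : OnePoint ℂ → OnePoint ℂ → ℝ := fun u v =>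
  match u, v with
  | (some z), (some w) => 2 * dist z w / (Real.sqrt (1 + ‖z‖ ^ 2) * Real.sqrt (1 + ‖w‖ ^ 2))
  | (some z), none => 2 / Real.sqrt (1 + ‖z‖ ^ 2)
  | none, (some w) => 2 / Real.sqrt (1 + ‖w‖ ^ 2)
  | none, none => 0

/-- The Fatou set of `f`: the set of points `z` having a neighbourhood `U` on which the
family of iterates of `f` is normal, i.e. every sequence of iterates has a subsequence
converging uniformly on every compact subset of `U` (hence locally uniformly on `U`)
with respect to the spherical metric on the Riemann sphere `ℂ ∪ {∞}`. -/
def FatouSet (f : ℂ → ℂ) : Set ℂ :=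
  {z | ∃ U ∈ 𝓝 z, ∀ s : ℕ → ℕ, StrictMono s → ∃ t : ℕ → ℕ, StrictMono t ∧
    ∃ g : ℂ → OnePoint ℂ, ∀ K ⊆ U, IsCompact K → ∀ ε > 0, ∀ᶠ k in atTop,
      ∀ w ∈ K, sphericalDist (f^[s (t k)] w : ℂ) (g w) < ε}

/-- The Julia set of `f` is the complement of the Fatou set. -/
def JuliaSet (f : ℂ → ℂ) : Set ℂ := (FatouSet f)ᶜ

/-- `U` is a Fatou component of `f`: a connected component of the Fatou set. -/
def IsFatouComponent (f : ℂ → ℂ) (U : Set ℂ) : Prop :=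
  ∃ z ∈ FatouSet f, U = connectedComponentIn (FatouSet f) z

/-- A set `E ⊆ ℂ` is a spider's web if it is connected and there is a sequence of bounded,
simply connected domains `G k` with `G k ⊆ G (k+1)`, `∂(G k) ⊆ E`, and `⋃ k, G k = ℂ`. -/
def SpidersWeb (E : Set ℂ) : Prop :=
  IsConnected E ∧ ∃ G : ℕ → Set ℂ,
    (∀ k, IsOpen (G k) ∧ IsConnected (G k) ∧ IsBounded (G k) ∧ SimplyConnectedSpace (G k)) ∧
    (∀ k, G k ⊆ G (k + 1)) ∧ (∀ k, frontier (G k) ⊆ E) ∧ (⋃ k, G k) = univ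

/-- `X` is locally connected at `z`: every neighbourhood of `z` in the subspace `X`
contains a connected (not necessarily open) neighbourhood of `z` in `X`. -/
def LocallyConnectedAt (X : Set ℂ) (z : ℂ) : Prop :=
  ∀ V ∈ 𝓝[X] z, ∃ W ∈ 𝓝[X] z, W ⊆ V ∧ W ⊆ X ∧ IsConnected W

/-- `z` is a buried point of `f`: it lies in the Julia set but not on the boundary of
any Fatou component. -/
def BuriedPoint (f : ℂ → ℂ) (z : ℂ) : Prop :=
  z ∈ JuliaSet f ∧ ∀ U : Set ℂ, IsFatouComponent f U → z ∉ frontier U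

/-- The residual Julia set: the set of buried points. -/
def ResidualJuliaSet (f : ℂ → ℂ) : Set ℂ := {z | BuriedPoint f z}

/-- A set `S ⊆ ℂ` surrounds a point `z` if `z` lies in a bounded connected component of
the complement of `S`. -/
def Surrounds (S : Set ℂ) (z : ℂ) : Prop :=
  z ∈ Sᶜ ∧ IsBounded (connectedComponentIn Sᶜ z)

/-- A Jordan curve: a subset of `ℂ` homeomorphic to a circle. -/
def IsJordanCurve (C : Set ℂ) : Prop :=
  Nonempty (C ≃ₜ Metric.sphere (0 : ℂ) 1)

/-- The spherical diameter of a subset of `ℂ`, with respect to the chordal metric on the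
Riemann sphere. -/
noncomputable def sphericalDiam (S : Set ℂ) : ℝ :=
  sSup ((fun p : ℂ × ℂ => sphericalDist (p.1 : OnePoint ℂ) (p.2 : OnePoint ℂ)) '' (S ×ˢ S))

/-! ### Auxiliary lemmas for the proof -/

lemma sphericalDist_coe_coe (a b : ℂ) :
    sphericalDist (a : OnePoint ℂ) (b : OnePoint ℂ)
      = 2 * dist a b / (Real.sqrt (1 + ‖a‖ ^ 2) * Real.sqrt (1 + ‖b‖ ^ 2)) := rfl

lemma sphericalDist_coe_none (a : ℂ) :
    sphericalDist (a : OnePoint ℂ) (none : OnePoint ℂ) = 2 / Real.sqrt (1 + ‖a‖ ^ 2) := rfl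

lemma sphericalDist_coe_le (a b : ℂ) :
    sphericalDist (a : OnePoint ℂ) (b : OnePoint ℂ) ≤ 2 * dist a b := by
  rw [sphericalDist_coe_coe]
  have h1 : (1 : ℝ) ≤ Real.sqrt (1 + ‖a‖ ^ 2) :=
    Real.one_le_sqrt.2 (by nlinarith [sq_nonneg ‖a‖])
  have h2 : (1 : ℝ) ≤ Real.sqrt (1 + ‖b‖ ^ 2) :=
    Real.one_le_sqrt.2 (by nlinarith [sq_nonneg ‖b‖])
  have h3 : (1 : ℝ) ≤ Real.sqrt (1 + ‖a‖ ^ 2) * Real.sqrt (1 + ‖b‖ ^ 2) := by nlinarith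
  exact div_le_self (by positivity) h3

lemma mem_juliaSet_iff {f : ℂ → ℂ} {x : ℂ} : x ∈ JuliaSet f ↔ x ∉ FatouSet f := Iff.rfl

lemma fatouSet_isOpen (f : ℂ → ℂ) : IsOpen (FatouSet f) := by
  rw [isOpen_iff_forall_mem_open]
  rintro z ⟨U, hU, hnorm⟩
  exact ⟨interior U, fun z' hz' => ⟨U, mem_interior_iff_mem_nhds.1 hz', hnorm⟩,
    isOpen_interior, mem_interior_iff_mem_nhds.2 hU⟩

/-- The Fatou set is forward invariant. -/
lemma fatouSet_fwd {f : ℂ → ℂ} (hd : Differentiable ℂ f)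
    (hnp : ¬ ∃ p : Polynomial ℂ, ∀ z, f z = p.eval z) {z : ℂ} (hz : z ∈ FatouSet f) :
    f z ∈ FatouSet f := by
  classical
  obtain ⟨U, hU, hnorm⟩ := hz
  obtain ⟨δ, hδpos, hδ⟩ := Metric.nhds_basis_closedBall.mem_iff.1 hU
  have hmap : 𝓝 (f z) ≤ Filter.map f (𝓝 z) := by
    rcases (hd.analyticAt z).eventually_constant_or_nhds_le_map_nhds with hc | h
    · exfalso
      apply hnp
      refine ⟨Polynomial.C (f z), fun w => ?_⟩
      have hconst : f = fun _ => f z :=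
        AnalyticOnNhd.eq_of_eventuallyEq (fun x _ => hd.analyticAt x) analyticOnNhd_const hc
      rw [Polynomial.eval_C]
      exact congrFun hconst w
    · exact h
  refine ⟨f '' Metric.ball z δ, hmap (Filter.image_mem_map (Metric.ball_mem_nhds z hδpos)), ?_⟩
  intro s' hs'
  have hs : StrictMono fun k => s' k + 1 := fun a b hab => by
    show s' a + 1 < s' b + 1
    exact Nat.add_lt_add_right (hs' hab) 1
  obtain ⟨t, ht, g, hg⟩ := hnorm _ hs
  refine ⟨t, ht, fun y => if h : ∃ x, x ∈ Metric.ball z δ ∧ f x = y then g h.choose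
    else ((0 : ℂ) : OnePoint ℂ), ?_⟩
  intro K hKV hKc ε hε
  filter_upwards [hg (Metric.closedBall z δ) hδ (isCompact_closedBall _ _) ε hε] with k hk
  intro y hy
  have hEx : ∃ x, x ∈ Metric.ball z δ ∧ f x = y := by
    rcases hKV hy with ⟨x, hx, rfl⟩; exact ⟨x, hx, rfl⟩
  rw [dif_pos hEx]
  have hx₀ := hEx.choose_spec
  have h1 : f^[s' (t k) + 1] hEx.choose = f^[s' (t k)] y := by
    rw [Function.iterate_succ_apply, hx₀.2]
  have h2 := hk hEx.choose (Metric.ball_subset_closedBall hx₀.1)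
  show sphericalDist ((f^[s' (t k)] y : ℂ) : OnePoint ℂ) (g hEx.choose) < ε
  rw [← h1]
  exact h2

lemma fatouSet_iter {f : ℂ → ℂ} (hd : Differentiable ℂ f)
    (hnp : ¬ ∃ p : Polynomial ℂ, ∀ z, f z = p.eval z) (n : ℕ) {z : ℂ}
    (hz : z ∈ FatouSet f) : f^[n] z ∈ FatouSet f := by
  induction n with
  | zero => exact hz
  | succ n ih => rw [Function.iterate_succ_apply']; exact fatouSet_fwd hd hnp ih

lemma frontier_component_subset_julia {f : ℂ → ℂ} (x : ℂ) :
    frontier (connectedComponentIn (FatouSet f) x) ⊆ JuliaSet f := by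
  intro y hy
  rw [mem_juliaSet_iff]
  intro hyF
  have hFopen := fatouSet_isOpen f
  have hVopen : IsOpen (connectedComponentIn (FatouSet f) y) := hFopen.connectedComponentIn
  have hyV : y ∈ connectedComponentIn (FatouSet f) y := mem_connectedComponentIn hyF
  obtain ⟨w, hwV, hwU⟩ := mem_closure_iff.1 (frontier_subset_closure hy) _ hVopen hyV
  have h1 : connectedComponentIn (FatouSet f) y = connectedComponentIn (FatouSet f) w :=
    connectedComponentIn_eq hwV
  have h2 : connectedComponentIn (FatouSet f) x = connectedComponentIn (FatouSet f) w :=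
    connectedComponentIn_eq hwU
  have hyU : y ∈ connectedComponentIn (FatouSet f) x := by
    rw [h2, ← h1]; exact hyV
  have hUopen : IsOpen (connectedComponentIn (FatouSet f) x) := hFopen.connectedComponentIn
  rw [hUopen.frontier_eq] at hy
  exact hy.2 hyU

lemma cross_frontier {S O : Set ℂ} (hS : IsPreconnected S) (hO : IsOpen O)
    (h1 : (S ∩ O).Nonempty) (h2 : (S \ closure O).Nonempty) :
    (S ∩ frontier O).Nonempty := by
  by_contra hc
  rw [Set.not_nonempty_iff_eq_empty] at hc
  have hcover : S ⊆ O ∪ (closure O)ᶜ := by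
    intro x hx
    by_cases hxc : x ∈ closure O
    · by_cases hxO : x ∈ O
      · exact Or.inl hxO
      · exact absurd (show x ∈ S ∩ frontier O from ⟨hx, by
          rw [hO.frontier_eq]; exact ⟨hxc, hxO⟩⟩)
          (by rw [hc]; exact Set.notMem_empty x)
    · exact Or.inr hxc
  obtain ⟨x, _, hxO, hxOc⟩ := hS O (closure O)ᶜ hO isClosed_closure.isOpen_compl hcover h1
    (by rwa [Set.diff_eq] at h2)
  exact hxOc (subset_closure hxO)

lemma conn_in_or_out {S O : Set ℂ} (hS : IsPreconnected S) (hO : IsOpen O)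
    (hdisj : S ∩ frontier O = ∅) : S ⊆ O ∨ S ∩ closure O = ∅ := by
  by_cases h1 : (S ∩ O).Nonempty
  · left
    by_cases h2 : (S \ closure O).Nonempty
    · exfalso
      obtain ⟨y, hy⟩ := cross_frontier hS hO h1 h2
      exact (Set.eq_empty_iff_forall_notMem.1 hdisj y) hy
    · intro x hx
      have hxcl : x ∈ closure O := by
        by_contra hxc; exact h2 ⟨x, hx, hxc⟩
      by_contra hxO
      exact (Set.eq_empty_iff_forall_notMem.1 hdisj x)
        ⟨hx, by rw [hO.frontier_eq]; exact ⟨hxcl, hxO⟩⟩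
  · right
    rw [Set.eq_empty_iff_forall_notMem]
    rintro x ⟨hxS, hxcl⟩
    by_cases hxO : x ∈ O
    · exact h1 ⟨x, hxS, hxO⟩
    · exact (Set.eq_empty_iff_forall_notMem.1 hdisj x)
        ⟨hxS, by rw [hO.frontier_eq]; exact ⟨hxcl, hxO⟩⟩

/-- Montel-type lemma: a sequence of entire functions uniformly bounded on a closed ball has a
subsequence converging uniformly on a strictly smaller closed ball. -/
lemma montel_subseq {FF : ℕ → ℂ → ℂ} (hd : ∀ m, Differentiable ℂ (FF m)) (z₀ : ℂ)
    {ρ₁ ρ₂ M : ℝ} (hρ₂ : 0 < ρ₂) (hρ₁₂ : ρ₂ < ρ₁)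
    (hb : ∀ m, ∀ x ∈ Metric.closedBall z₀ ρ₁, ‖FF m x‖ ≤ M) :
    ∃ σ : ℕ → ℕ, StrictMono σ ∧ ∃ h : ℂ → ℂ, ∀ ε > 0, ∀ᶠ m in atTop,
      ∀ w ∈ Metric.closedBall z₀ ρ₂, dist (FF (σ m) w) (h w) < ε := by
  classical
  have hρ₁ : 0 < ρ₁ := hρ₂.trans hρ₁₂
  have hM : 0 ≤ M := le_trans (norm_nonneg _) (hb 0 z₀ (Metric.mem_closedBall_self hρ₁.le))
  have hrr : 0 < ρ₁ - ρ₂ := sub_pos.2 hρ₁₂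
  set L : ℝ := M / (ρ₁ - ρ₂) with hLdef
  have hL0 : 0 ≤ L := div_nonneg hM hrr.le
  -- Cauchy estimate for the derivative
  have hderiv : ∀ m, ∀ x ∈ Metric.closedBall z₀ ρ₂, ‖deriv (FF m) x‖ ≤ L := by
    intro m x hx
    have h1 : Complex.cderiv (ρ₁ - ρ₂) (FF m) x = deriv (FF m) x :=
      Complex.cderiv_eq_deriv isOpen_univ (hd m).differentiableOn hrr (Set.subset_univ _)
    rw [← h1]
    refine Complex.norm_cderiv_le hrr ?_
    intro w hw
    refine hb m w ?_
    have hdist : dist w x = ρ₁ - ρ₂ := hw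
    have hx' : dist x z₀ ≤ ρ₂ := hx
    have : dist w z₀ ≤ dist w x + dist x z₀ := dist_triangle _ _ _
    have : dist w z₀ ≤ ρ₁ := by rw [hdist] at this; linarith
    exact this
  -- Lipschitz bound on the small ball
  have hlip : ∀ m, ∀ x ∈ Metric.closedBall z₀ ρ₂, ∀ y ∈ Metric.closedBall z₀ ρ₂,
      dist (FF m x) (FF m y) ≤ L * dist x y := by
    intro m x hx y hy
    have hfb : ∀ u ∈ Metric.closedBall z₀ ρ₂, ‖fderiv ℂ (FF m) u‖ ≤ L := by
      intro u hu
      refine ContinuousLinearMap.opNorm_le_bound _ hL0 fun v => ?_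
      have h3 : (fderiv ℂ (FF m) u) v = v • (fderiv ℂ (FF m) u) 1 := by
        rw [← map_smul]
        congr 1
        simp [smul_eq_mul]
      rw [h3, norm_smul]
      have h4 : (fderiv ℂ (FF m) u) 1 = deriv (FF m) u := rfl
      rw [h4, mul_comm]
      exact mul_le_mul_of_nonneg_right (hderiv m u hu) (norm_nonneg v)
    have := Convex.norm_image_sub_le_of_norm_fderiv_le
      (fun u _ => ((hd m) u : DifferentiableAt ℂ (FF m) u)) hfb
      (convex_closedBall z₀ ρ₂) hy hx
    rw [dist_eq_norm, dist_eq_norm]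
    exact this
  -- dense sequence in the small ball
  haveI : Nonempty (Metric.closedBall z₀ ρ₂) :=
    ⟨⟨z₀, Metric.mem_closedBall_self hρ₂.le⟩⟩
  set xs : ℕ → ℂ := fun i => (TopologicalSpace.denseSeq (Metric.closedBall z₀ ρ₂) i : ℂ)
    with hxsdef
  have hxs_mem : ∀ i, xs i ∈ Metric.closedBall z₀ ρ₂ := fun i =>
    (TopologicalSpace.denseSeq (Metric.closedBall z₀ ρ₂) i).2
  have hxs_dense : ∀ w ∈ Metric.closedBall z₀ ρ₂, ∀ δ > 0, ∃ i, dist w (xs i) < δ := by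
    intro w hw δ hδ
    have hdr : DenseRange (TopologicalSpace.denseSeq (Metric.closedBall z₀ ρ₂)) :=
      TopologicalSpace.denseRange_denseSeq _
    obtain ⟨i, hi⟩ := Metric.denseRange_iff.1 hdr ⟨w, hw⟩ δ hδ
    refine ⟨i, ?_⟩
    rw [Subtype.dist_eq] at hi
    exact hi
  -- compactness of countable product
  have hP : IsCompact (Set.pi Set.univ fun _ : ℕ => Metric.closedBall (0 : ℂ) M) :=
    isCompact_univ_pi fun _ => isCompact_closedBall (0 : ℂ) M
  have hΦmem : ∀ m, (fun i => FF m (xs i)) ∈ Set.pi Set.univ fun _ : ℕ =>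
      Metric.closedBall (0 : ℂ) M := by
    intro m
    rw [Set.mem_univ_pi]
    intro i
    rw [Metric.mem_closedBall, dist_zero_right]
    exact hb m _ (Metric.closedBall_subset_closedBall hρ₁₂.le (hxs_mem i))
  obtain ⟨a, -, σ, hσ, hσtend⟩ := hP.isSeqCompact hΦmem
  have hpt : ∀ i, Tendsto (fun m => FF (σ m) (xs i)) atTop (𝓝 (a i)) := fun i =>
    tendsto_pi_nhds.1 hσtend i
  -- uniform Cauchy property
  have KEY : ∀ ε > 0, ∃ N, ∀ m₁ ≥ N, ∀ m₂ ≥ N, ∀ w ∈ Metric.closedBall z₀ ρ₂,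
      dist (FF (σ m₁) w) (FF (σ m₂) w) < ε := by
    intro ε hε
    set δ : ℝ := ε / 4 / (L + 1) with hδdef
    have hδ : 0 < δ := by positivity
    have hLδ : L * δ ≤ ε / 4 := by
      have h5 : (L + 1) * δ = ε / 4 := by
        rw [hδdef, mul_comm]
        exact div_mul_cancel₀ _ (by positivity)
      nlinarith
    have hcover : Metric.closedBall z₀ ρ₂ ⊆ ⋃ i, Metric.ball (xs i) δ := by
      intro w hw
      obtain ⟨i, hi⟩ := hxs_dense w hw δ hδ
      exact Set.mem_iUnion.2 ⟨i, hi⟩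
    obtain ⟨I, hI⟩ := (isCompact_closedBall z₀ ρ₂).elim_finite_subcover _
      (fun i => Metric.isOpen_ball) hcover
    have hev : ∀ᶠ m in atTop, ∀ i ∈ I, dist (FF (σ m) (xs i)) (a i) < ε / 4 := by
      rw [eventually_all_finset]
      intro i _
      have := (hpt i) (Metric.ball_mem_nhds (a i) (show (0:ℝ) < ε/4 by positivity))
      simpa [Metric.mem_ball] using this
    obtain ⟨N, hN⟩ := eventually_atTop.1 hev
    refine ⟨N, fun m₁ hm₁ m₂ hm₂ w hw => ?_⟩
    obtain ⟨i, hiI, hwi⟩ : ∃ i ∈ I, w ∈ Metric.ball (xs i) δ := by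
      have := hI hw
      simpa using this
    have hwd : dist w (xs i) < δ := hwi
    have h1 : dist (FF (σ m₁) w) (FF (σ m₁) (xs i)) ≤ L * dist w (xs i) :=
      hlip (σ m₁) w hw (xs i) (hxs_mem i)
    have h2 : dist (FF (σ m₂) (xs i)) (FF (σ m₂) w) ≤ L * dist (xs i) w :=
      hlip (σ m₂) (xs i) (hxs_mem i) w hw
    have hd1 := hN m₁ hm₁ i hiI
    have hd2 := hN m₂ hm₂ i hiI
    have htri : dist (FF (σ m₁) w) (FF (σ m₂) w) ≤
        dist (FF (σ m₁) w) (FF (σ m₁) (xs i)) + dist (FF (σ m₁) (xs i)) (FF (σ m₂) (xs i))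
          + dist (FF (σ m₂) (xs i)) (FF (σ m₂) w) := dist_triangle4 _ _ _ _
    have hmid : dist (FF (σ m₁) (xs i)) (FF (σ m₂) (xs i)) ≤
        dist (FF (σ m₁) (xs i)) (a i) + dist (a i) (FF (σ m₂) (xs i)) := dist_triangle _ _ _
    have hb1 : L * dist w (xs i) ≤ ε / 4 := by
      have := mul_le_mul_of_nonneg_left hwd.le hL0
      linarith
    have hb2 : L * dist (xs i) w ≤ ε / 4 := by
      rw [dist_comm]
      exact hb1
    rw [dist_comm (a i)] at hmid
    linarith [dist_comm (FF (σ m₂) (xs i)) (a i)]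
  -- pointwise limits
  have hcau : ∀ w ∈ Metric.closedBall z₀ ρ₂, ∃ c : ℂ,
      Tendsto (fun m => FF (σ m) w) atTop (𝓝 c) := by
    intro w hw
    refine cauchySeq_tendsto_of_complete ?_
    rw [Metric.cauchySeq_iff]
    intro ε hε
    obtain ⟨N, hN⟩ := KEY ε hε
    exact ⟨N, fun m hm n hn => hN m hm n hn w hw⟩
  choose! c hc using hcau
  refine ⟨σ, hσ, c, ?_⟩
  intro ε hε
  obtain ⟨N, hN⟩ := KEY (ε/2) (half_pos hε)
  rw [eventually_atTop]
  refine ⟨N, fun m hm w hw => ?_⟩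
  have hlimd : Tendsto (fun n => dist (FF (σ m) w) (FF (σ n) w)) atTop
      (𝓝 (dist (FF (σ m) w) (c w))) := tendsto_const_nhds.dist (hc w hw)
  have hle : dist (FF (σ m) w) (c w) ≤ ε/2 :=
    le_of_tendsto hlimd (eventually_atTop.2 ⟨N, fun n hn => (hN m hm n hn w hw).le⟩)
  linarith [half_lt_self hε]

/-- If the Julia set of a transcendental entire function is a spider's web, then the
residual Julia set is nonempty. -/
theorem residualJulia_nonempty_of_spidersWeb (f : ℂ → ℂ) (hf : TranscendentalEntire f)
    (hsw : SpidersWeb (JuliaSet f)) :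
    (ResidualJuliaSet f).Nonempty := by
  classical
  by_contra hempty
  rw [Set.not_nonempty_iff_eq_empty] at hempty
  -- every Julia point lies in the frontier of a Fatou component
  have hcover : ∀ z ∈ JuliaSet f, ∃ U, IsFatouComponent f U ∧ z ∈ frontier U := by
    intro z hz
    by_contra hno
    push_neg at hno
    have : z ∈ ResidualJuliaSet f := ⟨hz, fun U hU => hno U hU⟩
    rw [hempty] at this
    exact this
  obtain ⟨hJconn, G, hGprops, hGsub, hGfront, hGunion⟩ := hsw
  have hFopen : IsOpen (FatouSet f) := fatouSet_isOpen f
  have hJclosed : IsClosed (JuliaSet f) := hFopen.isClosed_compl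
  have hGmono : Monotone G := monotone_nat_of_le_succ hGsub
  -- every compact set is inside some G m
  have habs : ∀ M : Set ℂ, IsCompact M → ∃ m, M ⊆ G m := by
    intro M hM
    obtain ⟨I, hI⟩ := hM.elim_finite_subcover G (fun k => (hGprops k).1)
      (hGunion ▸ Set.subset_univ M)
    refine ⟨I.sup id, fun x hx => ?_⟩
    obtain ⟨i, hiI, hxi⟩ := Set.mem_iUnion₂.1 (hI hx)
    exact hGmono (Finset.le_sup (f := id) hiI) hxi
  -- renested exhaustion H
  have hstep : ∀ m : ℕ, ∃ m', closure (G m) ⊆ G m' := fun m =>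
    habs (closure (G m)) ((hGprops m).2.2.1.isCompact_closure)
  choose cnext hcnext using hstep
  set φ : ℕ → ℕ := fun j => Nat.rec 0 (fun _ ih => max (cnext ih) (ih + 1)) j with hφdef
  have hφsucc : ∀ j, φ (j+1) = max (cnext (φ j)) (φ j + 1) := fun j => rfl
  set H : ℕ → Set ℂ := fun j => G (φ j) with hHdef
  have hHnest : ∀ j, closure (H j) ⊆ H (j+1) := by
    intro j
    refine (hcnext (φ j)).trans (hGmono ?_)
    rw [hφsucc]
    exact le_max_left _ _
  have hHsub : ∀ j, H j ⊆ H (j+1) := fun j => subset_closure.trans (hHnest j)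
  have hHmono : Monotone H := monotone_nat_of_le_succ hHsub
  have hφge : ∀ j, j ≤ φ j := by
    intro j
    induction j with
    | zero => exact Nat.zero_le _
    | succ j ih =>
      rw [hφsucc]
      have := le_max_right (cnext (φ j)) (φ j + 1)
      omega
  have hHopen : ∀ j, IsOpen (H j) := fun j => (hGprops (φ j)).1
  have hHbdd : ∀ j, IsBounded (H j) := fun j => (hGprops (φ j)).2.2.1
  have hHfront : ∀ j, frontier (H j) ⊆ JuliaSet f := fun j => hGfront (φ j)
  have hHexh : ∀ M : Set ℂ, IsCompact M → ∃ j, M ⊆ H j := by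
    intro M hM
    obtain ⟨m, hm⟩ := habs M hM
    exact ⟨m, hm.trans (hGmono (hφge m))⟩
  -- countably many component frontiers cover J
  set u : ℕ → ℂ := TopologicalSpace.denseSeq ℂ with hudef
  have hu : DenseRange u := TopologicalSpace.denseRange_denseSeq ℂ
  set W : ℕ → Set ℂ := fun i => frontier (connectedComponentIn (FatouSet f) (u i)) with hWdef
  have hWclosed : ∀ i, IsClosed (W i) := fun i => isClosed_frontier
  have hJcover : ∀ z ∈ JuliaSet f, ∃ i, z ∈ W i := by
    intro z hz
    obtain ⟨Uz, hUzcomp, hzUz⟩ := hcover z hz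
    obtain ⟨w₀, hw₀F, rfl⟩ := hUzcomp
    have hopen : IsOpen (connectedComponentIn (FatouSet f) w₀) := hFopen.connectedComponentIn
    have hne : (connectedComponentIn (FatouSet f) w₀).Nonempty :=
      ⟨w₀, mem_connectedComponentIn hw₀F⟩
    obtain ⟨i, hi⟩ := hu.exists_mem_open hopen hne
    have heq : connectedComponentIn (FatouSet f) w₀
        = connectedComponentIn (FatouSet f) (u i) := connectedComponentIn_eq hi
    refine ⟨i, ?_⟩
    show z ∈ frontier (connectedComponentIn (FatouSet f) (u i))
    rw [← heq]
    exact hzUz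
  -- Baire category on J
  haveI : CompleteSpace (JuliaSet f) := hJclosed.completeSpace_coe
  haveI : Nonempty (JuliaSet f) := hJconn.nonempty.to_subtype
  have hiUnion : (⋃ i, (Subtype.val ⁻¹' (W i) : Set (JuliaSet f))) = Set.univ := by
    ext z
    simp only [Set.mem_iUnion, Set.mem_preimage, Set.mem_univ, iff_true]
    exact hJcover z.1 z.2
  obtain ⟨i₀, hi₀⟩ := nonempty_interior_of_iUnion_of_closed
    (fun i => (hWclosed i).preimage continuous_subtype_val) hiUnion
  obtain ⟨⟨z₀, hz₀J⟩, hz₀i⟩ := hi₀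
  have hS : (Subtype.val ⁻¹' (W i₀) : Set (JuliaSet f)) ∈ 𝓝 (⟨z₀, hz₀J⟩ : JuliaSet f) :=
    mem_interior_iff_mem_nhds.1 hz₀i
  obtain ⟨r, hr, hball⟩ := Metric.mem_nhds_iff.1 hS
  have hrJ : ∀ y ∈ JuliaSet f, dist y z₀ < r → y ∈ W i₀ := by
    intro y hy hdy
    have : (⟨y, hy⟩ : JuliaSet f) ∈ Metric.ball (⟨z₀, hz₀J⟩ : JuliaSet f) r := by
      rw [Metric.mem_ball, Subtype.dist_eq]
      exact hdy
    exact hball this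
  have hz₀W : z₀ ∈ W i₀ := hball (Metric.mem_ball_self hr)
  set U : Set ℂ := connectedComponentIn (FatouSet f) (u i₀) with hUdef
  have hz₀U : z₀ ∈ frontier U := hz₀W
  have hUne : U.Nonempty := by
    rcases Set.eq_empty_or_nonempty U with h | h
    · exfalso
      have h7 : z₀ ∈ frontier U := hz₀U
      rw [h, frontier_empty] at h7
      exact h7
    · exact h
  have hui₀F : u i₀ ∈ FatouSet f := connectedComponentIn_nonempty_iff.1 hUne
  have hfrontU : ∀ y ∈ JuliaSet f, dist y z₀ < r → y ∈ frontier U := hrJ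
  -- radii
  set ρ₁ : ℝ := r / 4 with hρ₁def
  set ρ₂ : ℝ := r / 8 with hρ₂def
  have hρ₁pos : 0 < ρ₁ := by rw [hρ₁def]; linarith
  have hρ₂pos : 0 < ρ₂ := by rw [hρ₂def]; linarith
  have hρ₂₁ : ρ₂ < ρ₁ := by rw [hρ₁def, hρ₂def]; linarith
  have hρ₁r : ρ₁ < r := by rw [hρ₁def]; linarith
  set A : ℕ → Set ℂ := fun n => f^[n] '' Metric.closedBall z₀ ρ₁ with hAdef
  -- no crossing of a 5-chain of loops
  have hNoCross : ∀ n j, (A n ∩ closure (H j)).Nonempty → A n ⊆ H (j+4) := by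
    intro n j hmeet
    obtain ⟨a0, ha0A, ha0H⟩ := hmeet
    by_contra hnot
    obtain ⟨p, hpA, hpH⟩ := Set.not_subset.1 hnot
    have hAconn : IsPreconnected (A n) :=
      ((convex_closedBall z₀ ρ₁).isPreconnected).image _
        ((hf.1.continuous.iterate n)).continuousOn
    have hp1 : p ∉ closure (H (j+1)) := fun hp1 =>
      hpH (hHmono (show j+2 ≤ j+4 by omega) ((hHnest (j+1)) hp1))
    obtain ⟨y₁, hy₁A, hy₁fr⟩ := cross_frontier hAconn (hHopen (j+1))
      ⟨a0, ha0A, (hHnest j) ha0H⟩ ⟨p, hpA, hp1⟩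
    have hp3 : p ∉ closure (H (j+3)) := fun hp3 => hpH ((hHnest (j+3)) hp3)
    obtain ⟨y₂, hy₂A, hy₂fr⟩ := cross_frontier hAconn (hHopen (j+3))
      ⟨a0, ha0A, hHmono (show j+1 ≤ j+3 by omega) ((hHnest j) ha0H)⟩ ⟨p, hpA, hp3⟩
    obtain ⟨x₁, hx₁C, hx₁e⟩ := hy₁A
    obtain ⟨x₂, hx₂C, hx₂e⟩ := hy₂A
    have hy₁J : y₁ ∈ JuliaSet f := hHfront (j+1) hy₁fr
    have hy₂J : y₂ ∈ JuliaSet f := hHfront (j+3) hy₂fr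
    have hx₁J : x₁ ∈ JuliaSet f := by
      by_contra hcon
      rw [mem_juliaSet_iff, not_not] at hcon
      exact (mem_juliaSet_iff.1 hy₁J) (hx₁e ▸ fatouSet_iter hf.1 hf.2 n hcon)
    have hx₂J : x₂ ∈ JuliaSet f := by
      by_contra hcon
      rw [mem_juliaSet_iff, not_not] at hcon
      exact (mem_juliaSet_iff.1 hy₂J) (hx₂e ▸ fatouSet_iter hf.1 hf.2 n hcon)
    have hx₁U : x₁ ∈ closure U := frontier_subset_closure
      (hfrontU x₁ hx₁J (lt_of_le_of_lt (Metric.mem_closedBall.1 hx₁C) hρ₁r))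
    have hx₂U : x₂ ∈ closure U := frontier_subset_closure
      (hfrontU x₂ hx₂J (lt_of_le_of_lt (Metric.mem_closedBall.1 hx₂C) hρ₁r))
    set Un : Set ℂ := connectedComponentIn (FatouSet f) (f^[n] (u i₀)) with hUndef
    have hfuF : f^[n] (u i₀) ∈ FatouSet f := fatouSet_iter hf.1 hf.2 n hui₀F
    have himg : f^[n] '' U ⊆ Un := by
      apply IsPreconnected.subset_connectedComponentIn
      · exact isPreconnected_connectedComponentIn.image _
          ((hf.1.continuous.iterate n)).continuousOn
      · exact ⟨u i₀, mem_connectedComponentIn hui₀F, rfl⟩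
      · rintro - ⟨x, hx, rfl⟩
        exact fatouSet_iter hf.1 hf.2 n (connectedComponentIn_subset _ _ hx)
    have hclo : f^[n] '' closure U ⊆ closure Un :=
      (image_closure_subset_closure_image (hf.1.continuous.iterate n)).trans
        (closure_mono himg)
    have hy₁cl : y₁ ∈ closure Un := hclo ⟨x₁, hx₁U, hx₁e⟩
    have hy₂cl : y₂ ∈ closure Un := hclo ⟨x₂, hx₂U, hx₂e⟩
    have hdisj : Un ∩ frontier (H (j+2)) = ∅ := by
      rw [Set.eq_empty_iff_forall_notMem]
      rintro x ⟨hxUn, hxfr⟩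
      exact (mem_juliaSet_iff.1 (hHfront (j+2) hxfr)) (connectedComponentIn_subset _ _ hxUn)
    rcases conn_in_or_out isPreconnected_connectedComponentIn (hHopen (j+2)) hdisj
      with hin | hout
    · have h6 : y₂ ∈ H (j+3) := (hHnest (j+2)) ((closure_mono hin) hy₂cl)
      rw [(hHopen (j+3)).frontier_eq] at hy₂fr
      exact hy₂fr.2 h6
    · have hy₁O : y₁ ∈ H (j+2) := (hHnest (j+1)) (frontier_subset_closure hy₁fr)
      obtain ⟨w, hwH, hwUn⟩ := mem_closure_iff.1 hy₁cl (H (j+2)) (hHopen (j+2)) hy₁O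
      exact (Set.eq_empty_iff_forall_notMem.1 hout w) ⟨hwUn, subset_closure hwH⟩
  -- z₀ is not in the Fatou set: get a bad sequence
  have hz₀F : z₀ ∉ FatouSet f := mem_juliaSet_iff.1 hz₀J
  have hmain : ∃ s : ℕ → ℕ, StrictMono s ∧ ∀ t : ℕ → ℕ, StrictMono t →
      ∀ g : ℂ → OnePoint ℂ, ∃ K, K ⊆ Metric.ball z₀ ρ₂ ∧ IsCompact K ∧ ∃ ε, 0 < ε ∧
        ¬ (∀ᶠ k in atTop, ∀ w ∈ K, sphericalDist ((f^[s (t k)] w : ℂ) : OnePoint ℂ) (g w) < ε) := by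
    by_contra hcon
    push_neg at hcon
    refine hz₀F ⟨Metric.ball z₀ ρ₂, Metric.ball_mem_nhds z₀ hρ₂pos, ?_⟩
    intro s hs
    obtain ⟨t, ht, g, hg⟩ := hcon s hs
    exact ⟨t, ht, g, fun K hK hKc ε hε => hg K hK hKc ε hε⟩
  obtain ⟨s, hsmono, hbad⟩ := hmain
  set T : ℕ → Set ℕ := fun j => {k | (A (s k) ∩ closure (H j)).Nonempty} with hTdef
  by_cases hinf : ∃ j, (T j).Infinite
  · -- a subsequence is uniformly bounded: Montel gives a convergent subsequence
    obtain ⟨j, hTj⟩ := hinf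
    obtain ⟨M, hM⟩ := isBounded_iff_forall_norm_le.1 (hHbdd (j+4))
    have hTj' : {k | k ∈ T j}.Infinite := by simpa [Set.setOf_mem_eq] using hTj
    set τ : ℕ → ℕ := Nat.nth (fun k => k ∈ T j) with hτdef
    have hτmono : StrictMono τ := Nat.nth_strictMono hTj'
    have hτmem : ∀ m, τ m ∈ T j := fun m => Nat.nth_mem_of_infinite hTj' m
    have hbound : ∀ m, ∀ x ∈ Metric.closedBall z₀ ρ₁, ‖f^[s (τ m)] x‖ ≤ M := by
      intro m x hx
      exact hM _ (hNoCross (s (τ m)) j (hτmem m) ⟨x, hx, rfl⟩)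
    obtain ⟨σ, hσ, h, hconv⟩ := montel_subseq (FF := fun m => f^[s (τ m)])
      (fun m => hf.1.iterate (s (τ m))) z₀ hρ₂pos hρ₂₁ hbound
    obtain ⟨K, hKsub, hKcpt, ε, hε, hfail⟩ := hbad (fun m => τ (σ m)) (hτmono.comp hσ)
      (fun w => ((h w : ℂ) : OnePoint ℂ))
    apply hfail
    filter_upwards [hconv (ε/2) (half_pos hε)] with m hm
    intro w hw
    have hw₂ : w ∈ Metric.closedBall z₀ ρ₂ := Metric.ball_subset_closedBall (hKsub hw)
    have hdgood := hm w hw₂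
    show sphericalDist ((f^[s (τ (σ m))] w : ℂ) : OnePoint ℂ) ((h w : ℂ) : OnePoint ℂ) < ε
    calc sphericalDist ((f^[s (τ (σ m))] w : ℂ) : OnePoint ℂ) ((h w : ℂ) : OnePoint ℂ)
        ≤ 2 * dist (f^[s (τ (σ m))] w) (h w) := sphericalDist_coe_le _ _
      _ < ε := by linarith
  · -- all T j finite: uniform escape to infinity
    push_neg at hinf
    obtain ⟨K, hKsub, hKcpt, ε, hε, hfail⟩ := hbad id strictMono_id
      (fun _ => (none : OnePoint ℂ))
    apply hfail
    obtain ⟨j, hj⟩ := hHexh (Metric.closedBall 0 (2/ε + 1)) (isCompact_closedBall _ _)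
    have hfin : (T j).Finite := hinf j
    obtain ⟨N, hN⟩ : ∃ N, ∀ k ∈ T j, k < N := by
      obtain ⟨b, hb⟩ := hfin.bddAbove
      exact ⟨b+1, fun k hk => Nat.lt_succ_of_le (hb hk)⟩
    rw [eventually_atTop]
    refine ⟨N, fun k hk w hw => ?_⟩
    have hknot : k ∉ T j := fun hmem => absurd (hN k hmem) (by omega)
    have hwC₁ : w ∈ Metric.closedBall z₀ ρ₁ :=
      Metric.closedBall_subset_closedBall hρ₂₁.le
        (Metric.ball_subset_closedBall (hKsub hw))
    have hnotH : f^[s k] w ∉ closure (H j) := by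
      intro hcmem
      exact hknot ⟨f^[s k] w, ⟨w, hwC₁, rfl⟩, hcmem⟩
    have hnorm : 2/ε + 1 < ‖f^[s k] w‖ := by
      by_contra hle
      push_neg at hle
      refine hnotH (subset_closure (hj ?_))
      rw [Metric.mem_closedBall, dist_zero_right]
      exact hle
    have hpos : (0:ℝ) < ‖f^[s k] w‖ := by
      have : (0:ℝ) < 2/ε + 1 := by positivity
      linarith
    show sphericalDist ((f^[s k] w : ℂ) : OnePoint ℂ) (none : OnePoint ℂ) < ε
    rw [sphericalDist_coe_none]
    have h2 : ‖f^[s k] w‖ ≤ Real.sqrt (1 + ‖f^[s k] w‖ ^ 2) := by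
      rw [show ‖f^[s k] w‖ = Real.sqrt (‖f^[s k] w‖ ^ 2) from
        (Real.sqrt_sq (norm_nonneg _)).symm]
      exact Real.sqrt_le_sqrt (by nlinarith [Real.sq_sqrt (show (0:ℝ) ≤ ‖f^[s k] w‖^2 by positivity)])
    have h3 : 2 / Real.sqrt (1 + ‖f^[s k] w‖ ^ 2) ≤ 2 / ‖f^[s k] w‖ :=
      div_le_div_of_nonneg_left (by norm_num) hpos h2
    have h4 : 2 / ‖f^[s k] w‖ < ε := by
      rw [div_lt_iff₀ hpos]
      have h5 : 2/ε < ‖f^[s k] w‖ := by linarith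
      rw [div_lt_iff₀ hε] at h5
      linarith [mul_comm ε ‖f^[s k] w‖]
    linarith

end
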